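/- Let Y₀ be an (m,n)-hook Young diagram. The map sending T ⊗ c (T an (m,n)-semistandard tableau of shape Y₀, c ∈ B) to the output of the column bumping procedure is a bijection from B(Y₀) × B onto the disjoint union ⊔_{Y ∈ 𝒴} B(Y), where 𝒴 is the set of (m,n)-hook Young diagrams obtained from Y₀ by adding one box at a co-corner. -/

import Mathlib

/-- Row-semistandardness of a horizontal pair of letters (codes `0,…,m+n-1`,
barred = codes `< m`). -/
def rowSS (m x y : ℕ) : Prop := x ≤ y ∧ (x = y → x < m)

/-- Column-semistandardness of a vertical pair of letters. -/
def colSS (m x y : ℕ) : Prop := x ≤ y ∧ (x = y → m ≤ x)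

instance (m x y : ℕ) : Decidable (rowSS m x y) := by unfold rowSS; infer_instance
instance (m x y : ℕ) : Decidable (colSS m x y) := by unfold colSS; infer_instance
instance (m : ℕ) : DecidableRel (colSS m) := fun _ _ => inferInstance

/-- The `j`-th column of a column-wise presented tableau. -/
def colAt (cols : List (ℕ × List ℕ)) (j : ℕ) : ℕ × List ℕ := cols.getD j (0, [])

/-- `(m,n)`-semistandardness of a column-wise presented (skew) tableau. -/
def IsSkewSSYT (m n : ℕ) (cols : List (ℕ × List ℕ)) : Prop :=
  (∀ c ∈ cols, c.2 ≠ []) ∧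
  (∀ c ∈ cols, c.2.Chain' (colSS m)) ∧
  (∀ c ∈ cols, ∀ x ∈ c.2, x < m + n) ∧
  (∀ j, j + 1 < cols.length →
    (colAt cols (j+1)).1 ≤ (colAt cols j).1 ∧
    (colAt cols (j+1)).1 + (colAt cols (j+1)).2.length
        ≤ (colAt cols j).1 + (colAt cols j).2.length ∧
    ∀ i, (colAt cols j).1 ≤ i →
      i < (colAt cols (j+1)).1 + (colAt cols (j+1)).2.length →
      rowSS m ((colAt cols j).2.getD (i - (colAt cols j).1) 0)
        ((colAt cols (j+1)).2.getD (i - (colAt cols (j+1)).1) 0))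

/-- The column bumping procedure. -/
def skewBump (m : ℕ) : ℕ → List (ℕ × List ℕ) → List (ℕ × List ℕ)
  | b, [] => [(0, [b])]
  | b, (o, l) :: rest =>
    if (l ++ [b]).IsChain (colSS m) then (o, l ++ [b]) :: rest
    else
      (o, l.set (l.findIdx fun a => decide (rowSS m b a)) b) ::
        skewBump m (l.getD (l.findIdx fun a => decide (rowSS m b a)) 0) rest

namespace BKK

lemma rowSS_iff {m x y : ℕ} : rowSS m x y ↔ (x < y ∨ (x = y ∧ x < m)) := by
  unfold rowSS; omega

lemma colSS_iff {m x y : ℕ} : colSS m x y ↔ (x < y ∨ (x = y ∧ m ≤ x)) := by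
  unfold colSS; omega

lemma getD_eq_get {c : List ℕ} {i : ℕ} (h : i < c.length) : c.getD i 0 = c.get ⟨i, h⟩ := by
  simp [List.getD_eq_getElem?_getD, List.getElem?_eq_getElem h]

lemma getD_set_self {c : List ℕ} {i : ℕ} (h : i < c.length) (x : ℕ) :
    (c.set i x).getD i 0 = x := by
  rw [getD_eq_get (by simpa using h)]; simp [h]

lemma getD_set_ne {c : List ℕ} {i j : ℕ} (h : i ≠ j) (x : ℕ) :
    (c.set i x).getD j 0 = c.getD j 0 := by
  by_cases hj : j < c.length
  · rw [getD_eq_get (by simpa using hj), getD_eq_get hj]; simp [h]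
  · rw [List.getD_eq_default, List.getD_eq_default] <;> simpa using hj

lemma chain'_iff_getD {m : ℕ} {c : List ℕ} :
    c.IsChain (colSS m) ↔ ∀ i, i + 1 < c.length → colSS m (c.getD i 0) (c.getD (i+1) 0) := by
  rw [List.isChain_iff_getElem]
  constructor
  · intro h i hi
    rw [getD_eq_get (by omega), getD_eq_get hi]
    simpa using h i (by omega)
  · intro h i hi
    have := h i (by omega)
    rw [getD_eq_get (by omega), getD_eq_get (by omega)] at this
    simpa using this

lemma col_mono {m : ℕ} {c : List ℕ} (hc : c.IsChain (colSS m)) :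
    ∀ {i j : ℕ}, i ≤ j → j < c.length → c.getD i 0 ≤ c.getD j 0 := by
  have key : ∀ (d i : ℕ), i + d < c.length → c.getD i 0 ≤ c.getD (i + d) 0 := by
    intro d
    induction d with
    | zero => simp
    | succ d ih =>
      intro i h
      have h1 := ih i (by omega)
      have h2 := (chain'_iff_getD.1 hc) (i + d) (by omega)
      rw [colSS_iff] at h2
      have : i + (d+1) = (i+d) + 1 := by omega
      rw [this]; omega
  intro i j hij hj
  have : j = i + (j - i) := by omega
  rw [this]; exact key _ _ (by omega)

lemma col_eq {m : ℕ} {c : List ℕ} (hc : c.IsChain (colSS m)) {i j : ℕ}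
    (hij : i < j) (hj : j < c.length) (he : c.getD i 0 = c.getD j 0) :
    m ≤ c.getD i 0 := by
  have h1 := col_mono hc (show i ≤ i + 1 by omega) (by omega)
  have h2 := col_mono hc (show i + 1 ≤ j by omega) hj
  have h3 := (chain'_iff_getD.1 hc) i (by omega)
  rw [colSS_iff] at h3; omega

lemma rowSS_down {m x : ℕ} {L : List ℕ} (hL : L.IsChain (colSS m)) {i j : ℕ}
    (hij : i ≤ j) (hj : j < L.length) (h : rowSS m (L.getD j 0) x) :
    rowSS m (L.getD i 0) x := by
  have := col_mono hL hij hj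
  rcases Nat.eq_or_lt_of_le this with he | hlt
  · rwa [he]
  · rw [rowSS_iff] at h ⊢; omega

lemma exists_greatest {P : ℕ → Prop} [DecidablePred P] {N i₀ : ℕ} (hi : i₀ < N) (hP : P i₀) :
    ∃ r, i₀ ≤ r ∧ r < N ∧ P r ∧ ∀ i, r < i → i < N → ¬ P i := by
  induction N with
  | zero => omega
  | succ N ih =>
    by_cases hN : i₀ < N
    · by_cases hPN : P N
      · exact ⟨N, by omega, by omega, hPN, fun i h1 h2 => by omega⟩
      · obtain ⟨r, h1, h2, h3, h4⟩ := ih hN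
        exact ⟨r, h1, by omega, h3, fun i hi1 hi2 => by
          rcases Nat.lt_or_ge i N with h | h
          · exact h4 i hi1 h
          · have : i = N := by omega
            rwa [this]⟩
    · have : i₀ = N := by omega
      subst this
      exact ⟨i₀, le_refl _, by omega, hP, fun i h1 h2 => by omega⟩



def lenk (cols : List (ℕ × List ℕ)) (j : ℕ) : ℕ := (colAt cols j).2.length
def entk (cols : List (ℕ × List ℕ)) (j i : ℕ) : ℕ := (colAt cols j).2.getD i 0

@[simp] lemma colAt_nil (j : ℕ) : colAt [] j = (0, []) := by simp [colAt]
@[simp] lemma colAt_cons_zero (c : ℕ × List ℕ) (rest : List (ℕ × List ℕ)) :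
    colAt (c :: rest) 0 = c := by simp [colAt]
@[simp] lemma colAt_cons_succ (c : ℕ × List ℕ) (rest : List (ℕ × List ℕ)) (j : ℕ) :
    colAt (c :: rest) (j+1) = colAt rest j := by simp [colAt]

@[simp] lemma lenk_nil (j : ℕ) : lenk [] j = 0 := by simp [lenk]
@[simp] lemma lenk_cons_zero (c : ℕ × List ℕ) (rest : List (ℕ × List ℕ)) :
    lenk (c :: rest) 0 = c.2.length := by simp [lenk]
@[simp] lemma lenk_cons_succ (c : ℕ × List ℕ) (rest : List (ℕ × List ℕ)) (j : ℕ) :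
    lenk (c :: rest) (j+1) = lenk rest j := by simp [lenk]
@[simp] lemma entk_cons_zero (c : ℕ × List ℕ) (rest : List (ℕ × List ℕ)) (i : ℕ) :
    entk (c :: rest) 0 i = c.2.getD i 0 := by simp [entk]
@[simp] lemma entk_cons_succ (c : ℕ × List ℕ) (rest : List (ℕ × List ℕ)) (j i : ℕ) :
    entk (c :: rest) (j+1) i = entk rest j i := by simp [entk]

/-- Straight (m,n)-tableau, column-wise, offsets all 0. -/
def GT (m n : ℕ) (cols : List (ℕ × List ℕ)) : Prop :=
  (∀ c ∈ cols, c.1 = 0) ∧ (∀ c ∈ cols, c.2 ≠ []) ∧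
  (∀ c ∈ cols, c.2.IsChain (colSS m)) ∧ (∀ c ∈ cols, ∀ a ∈ c.2, a < m + n) ∧
  (∀ j, lenk cols (j+1) ≤ lenk cols j) ∧
  (∀ j i, i < lenk cols (j+1) → rowSS m (entk cols j i) (entk cols (j+1) i))

lemma lenk_eq_zero {cols : List (ℕ × List ℕ)} (hne : ∀ c ∈ cols, c.2 ≠ []) {j : ℕ} :
    lenk cols j = 0 ↔ cols.length ≤ j := by
  constructor
  · intro h
    by_contra hlt
    push_neg at hlt
    have : colAt cols j ∈ cols := by
      unfold colAt
      rw [List.getD_eq_getElem _ _ hlt]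
      exact List.getElem_mem hlt
    have h2 := hne _ this
    simp only [lenk] at h
    exact h2 (List.length_eq_zero_iff.1 h)
  · intro h
    unfold lenk colAt
    rw [List.getD_eq_default _ _ h]
    rfl

lemma GT_nil (m n : ℕ) : GT m n [] := by
  refine ⟨by simp, by simp, by simp, by simp, by simp, ?_⟩
  intro j i hi; simp at hi

lemma GT_cons_iff {m n : ℕ} {o : ℕ} {c : List ℕ} {rest : List (ℕ × List ℕ)} :
    GT m n ((o, c) :: rest) ↔
      GT m n rest ∧ o = 0 ∧ c ≠ [] ∧ c.IsChain (colSS m) ∧ (∀ a ∈ c, a < m + n) ∧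
      lenk rest 0 ≤ c.length ∧
      (∀ i < lenk rest 0, rowSS m (c.getD i 0) (entk rest 0 i)) := by
  constructor
  · rintro ⟨h1, h2, h3, h4, h5, h6⟩
    refine ⟨⟨?_, ?_, ?_, ?_, ?_, ?_⟩, ?_, ?_, ?_, ?_, ?_, ?_⟩
    · exact fun x hx => h1 x (List.mem_cons_of_mem _ hx)
    · exact fun x hx => h2 x (List.mem_cons_of_mem _ hx)
    · exact fun x hx => h3 x (List.mem_cons_of_mem _ hx)
    · exact fun x hx => h4 x (List.mem_cons_of_mem _ hx)
    · intro j; have := h5 (j+1); simpa using this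
    · intro j i hi; have := h6 (j+1) i (by simpa using hi); simpa using this
    · exact h1 (o, c) (List.mem_cons_self)
    · exact h2 (o, c) (List.mem_cons_self)
    · exact h3 (o, c) (List.mem_cons_self)
    · exact h4 (o, c) (List.mem_cons_self)
    · have := h5 0; simpa using this
    · intro i hi; have := h6 0 i (by simpa using hi); simpa using this
  · rintro ⟨⟨h1, h2, h3, h4, h5, h6⟩, ho, hne, hch, hbd, hlen, hrow⟩
    refine ⟨?_, ?_, ?_, ?_, ?_, ?_⟩
    · intro x hx
      rcases List.mem_cons.1 hx with hx | hx
      · simp [hx, ho]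
      · exact h1 x hx
    · intro x hx
      rcases List.mem_cons.1 hx with hx | hx
      · simpa [hx] using hne
      · exact h2 x hx
    · intro x hx
      rcases List.mem_cons.1 hx with hx | hx
      · simpa [hx] using hch
      · exact h3 x hx
    · intro x hx
      rcases List.mem_cons.1 hx with hx | hx
      · simpa [hx] using hbd
      · exact h4 x hx
    · intro j
      cases j with
      | zero => simpa using hlen
      | succ j => simpa using h5 j
    · intro j i hi
      cases j with
      | zero => simp only [lenk_cons_succ] at hi; simpa using hrow i hi
      | succ j =>
        simp only [lenk_cons_succ] at hi
        simpa using h6 j i hi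

lemma GT.tail {m n : ℕ} {o : ℕ} {c : List ℕ} {rest : List (ℕ × List ℕ)}
    (h : GT m n ((o, c) :: rest)) : GT m n rest := (GT_cons_iff.1 h).1

lemma GT_lenk_mono {m n : ℕ} {cols : List (ℕ × List ℕ)} (h : GT m n cols) :
    ∀ {j k : ℕ}, j ≤ k → lenk cols k ≤ lenk cols j := by
  have key : ∀ (d j : ℕ), lenk cols (j + d) ≤ lenk cols j := by
    intro d
    induction d with
    | zero => simp
    | succ d ih =>
      intro j
      calc lenk cols (j + (d+1)) = lenk cols ((j+d) + 1) := by ring_nf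
        _ ≤ lenk cols (j+d) := h.2.2.2.2.1 _
        _ ≤ lenk cols j := ih j
  intro j k hjk
  have : k = j + (k - j) := by omega
  rw [this]; exact key _ _

/-- GT is equivalent to IsSkewSSYT + zero offsets. -/
lemma GT_iff {m n : ℕ} {cols : List (ℕ × List ℕ)} :
    GT m n cols ↔ IsSkewSSYT m n cols ∧ ∀ c ∈ cols, c.1 = 0 := by
  have hfst : (∀ c ∈ cols, c.1 = 0) → ∀ j, (colAt cols j).1 = 0 := by
    intro h j
    by_cases hj : j < cols.length
    · apply h
      unfold colAt
      rw [List.getD_eq_getElem _ _ hj]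
      exact List.getElem_mem hj
    · unfold colAt
      rw [List.getD_eq_default _ _ (by omega)]
  constructor
  · rintro ⟨h1, h2, h3, h4, h5, h6⟩
    refine ⟨⟨h2, h3, h4, ?_⟩, h1⟩
    intro j hj
    rw [hfst h1 j, hfst h1 (j+1)]
    refine ⟨le_refl _, by simpa [lenk] using h5 j, ?_⟩
    intro i _ hi
    simp only [Nat.zero_add, Nat.sub_zero] at hi ⊢
    exact h6 j i (by simpa [lenk] using hi)
  · rintro ⟨⟨h2, h3, h4, h5⟩, h1⟩
    refine ⟨h1, h2, h3, h4, ?_, ?_⟩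
    · intro j
      by_cases hj : j + 1 < cols.length
      · have := (h5 j hj).2.1
        rw [hfst h1 j, hfst h1 (j+1)] at this
        simpa [lenk] using this
      · have : lenk cols (j+1) = 0 := (lenk_eq_zero h2).2 (by omega)
        omega
    · intro j i hi
      by_cases hj : j + 1 < cols.length
      · have := (h5 j hj).2.2 i (by rw [hfst h1 j]; omega)
          (by rw [hfst h1 (j+1)]; simpa [lenk] using hi)
        rw [hfst h1 j, hfst h1 (j+1)] at this
        simpa [lenk, entk] using this
      · have : lenk cols (j+1) = 0 := (lenk_eq_zero h2).2 (by omega)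
        omega

/-! ### Single-column bump step facts -/

lemma not_colSS_rowSS {m x y : ℕ} (h : ¬ colSS m y x) : rowSS m x y := by
  rw [colSS_iff] at h; rw [rowSS_iff]; omega

lemma not_rowSS_colSS {m x y : ℕ} (h : ¬ rowSS m x y) : colSS m y x := by
  rw [rowSS_iff] at h; rw [colSS_iff]; omega

lemma chain'_append_singleton {m : ℕ} {c : List ℕ} (hne : c ≠ []) (x : ℕ) :
    (c ++ [x]).IsChain (colSS m) ↔
      c.IsChain (colSS m) ∧ colSS m (c.getD (c.length - 1) 0) x := by
  rw [List.isChain_append]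
  have hlast : c.getLast? = some (c.getD (c.length - 1) 0) := by
    rw [List.getLast?_eq_getLast hne, List.getLast_eq_getElem]
    rw [getD_eq_get (by have := List.length_pos_iff.2 hne; omega)]
    simp
  simp [hlast]

lemma rowSS_trans {m x a b : ℕ} (h1 : rowSS m x a) (h2 : rowSS m a b) : rowSS m x b := by
  rw [rowSS_iff] at *; omega

/-- The landing index of `x` in column `c`. -/
def bidx (m x : ℕ) (c : List ℕ) : ℕ := c.findIdx fun a => decide (rowSS m x a)

lemma bidx_facts {m x : ℕ} {c : List ℕ} (hne : c ≠ []) (hc : c.IsChain (colSS m))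
    (hbr : ¬ (c ++ [x]).IsChain (colSS m)) :
    bidx m x c < c.length ∧ rowSS m x (c.getD (bidx m x c) 0) ∧
      ∀ i < bidx m x c, ¬ rowSS m x (c.getD i 0) := by
  have hlen : 0 < c.length := List.length_pos_iff.2 hne
  have hlastr : rowSS m x (c.getD (c.length - 1) 0) := by
    apply not_colSS_rowSS
    intro hcol
    exact hbr ((chain'_append_singleton hne x).2 ⟨hc, hcol⟩)
  have hex : ∃ a ∈ c, (fun a => decide (rowSS m x a)) a = true := by
    refine ⟨c.getD (c.length - 1) 0, ?_, by simpa using hlastr⟩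
    rw [getD_eq_get (by omega)]
    exact List.get_mem _ _
  have hlt : bidx m x c < c.length := List.findIdx_lt_length_of_exists hex
  refine ⟨hlt, ?_, ?_⟩
  · have := @List.findIdx_getElem _ (fun a => decide (rowSS m x a)) c hlt
    rw [getD_eq_get hlt]
    simp only [decide_eq_true_eq] at this
    exact this
  · intro i hi
    have hic : i < c.length := by omega
    have h5 := List.not_of_lt_findIdx (p := fun a => decide (rowSS m x a)) (xs := c) hi
    rw [getD_eq_get hic]
    simp only [decide_eq_false_iff_not] at h5
    simpa using h5

lemma chain_set {m x : ℕ} {c : List ℕ} (hc : c.IsChain (colSS m)) {idx : ℕ}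
    (hidx : idx < c.length) (hrow : rowSS m x (c.getD idx 0))
    (hmin : ∀ i < idx, ¬ rowSS m x (c.getD i 0)) :
    (c.set idx x).IsChain (colSS m) := by
  rw [chain'_iff_getD]
  intro i hi
  simp only [List.length_set] at hi
  have hcc := chain'_iff_getD.1 hc i hi
  rcases Nat.lt_trichotomy (i+1) idx with h | h | h
  · rw [getD_set_ne (by omega), getD_set_ne (by omega)]; exact hcc
  · -- i+1 = idx
    rw [getD_set_ne (by omega), ← h, getD_set_self (by omega)]
    have h1 := hmin i (by omega)
    have h2 := not_rowSS_colSS h1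
    exact h2
  · rcases Nat.lt_or_ge idx i with h' | h'
    · rw [getD_set_ne (by omega), getD_set_ne (by omega)]; exact hcc
    · -- idx = i
      have : idx = i := by omega
      subst this
      rw [getD_set_self (by omega), getD_set_ne (by omega)]
      rw [colSS_iff]
      rw [rowSS_iff] at hrow
      rw [colSS_iff] at hcc
      omega

lemma set_last_char {m x : ℕ} {c : List ℕ} (hc : c.IsChain (colSS m)) {idx : ℕ}
    (hidx : idx < c.length) (hrow : rowSS m x (c.getD idx 0)) :
    ∀ i, idx < i → i < c.length →
      ¬ rowSS m ((c.set idx x).getD i 0) (c.getD idx 0) := by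
  intro i h1 h2 hcon
  rw [getD_set_ne (by omega)] at hcon
  have hmono := col_mono hc (show idx ≤ i by omega) h2
  have heq : c.getD i 0 = c.getD idx 0 := by
    rw [rowSS_iff] at hcon; omega
  have := col_eq hc h1 h2 heq.symm
  rw [rowSS_iff] at hcon
  omega

lemma last_unique {P : ℕ → Prop} {N r r' : ℕ} (h1 : r < N) (h2 : P r)
    (h3 : ∀ i, r < i → i < N → ¬ P i) (h1' : r' < N) (h2' : P r')
    (h3' : ∀ i, r' < i → i < N → ¬ P i) : r = r' := by
  rcases Nat.lt_trichotomy r r' with h | h | h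
  · exact absurd h2' (h3 r' h h1')
  · exact h
  · exact absurd h2 (h3' r h h1)

/-! ### The invariants -/

def Good (m n : ℕ) (L? : Option (List ℕ)) (cols : List (ℕ × List ℕ)) (x : ℕ) : Prop :=
  GT m n cols ∧ x < m + n ∧
  ∀ L ∈ L?, L.IsChain (colSS m) ∧ lenk cols 0 ≤ L.length ∧
    (∀ i < lenk cols 0, rowSS m (L.getD i 0) (entk cols 0 i)) ∧
    ∃ r < L.length, rowSS m (L.getD r 0) x ∧
      (∀ i, r < i → i < L.length → ¬ rowSS m (L.getD i 0) x) ∧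
      (r < lenk cols 0 → rowSS m x (entk cols 0 r))

def GoodOut (m n : ℕ) (L? : Option (List ℕ)) (sh : ℕ → ℕ) (q : List (ℕ × List ℕ)) : Prop :=
  GT m n q ∧ (∃ j, ∀ k, lenk q k = sh k + if k = j then 1 else 0) ∧
  ∀ L ∈ L?, lenk q 0 ≤ L.length ∧ ∀ i < lenk q 0, rowSS m (L.getD i 0) (entk q 0 i)

/-- Propagation of the invariant to the recursive call in the replace branch. -/
lemma step_good {m n o x : ℕ} {c : List ℕ} {rest : List (ℕ × List ℕ)}
    (hGT : GT m n ((o, c) :: rest)) (hx : x < m + n)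
    (hbr : ¬ (c ++ [x]).IsChain (colSS m)) :
    Good m n (some (c.set (bidx m x c) x)) rest (c.getD (bidx m x c) 0) := by
  obtain ⟨hGTr, ho, hne, hc, hbd, hlen0, hrow0⟩ := GT_cons_iff.1 hGT
  obtain ⟨hlt, hrow, hmin⟩ := bidx_facts hne hc hbr
  set idx := bidx m x c with hidx
  refine ⟨hGTr, ?_, ?_⟩
  · apply hbd
    rw [getD_eq_get hlt]
    exact List.get_mem _ _
  · intro L hL
    rw [Option.mem_def, Option.some.injEq] at hL
    subst hL
    refine ⟨chain_set hc hlt hrow hmin, by simpa using hlen0, ?_, ?_⟩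
    · intro i hi
      by_cases h : i = idx
      · subst h
        rw [getD_set_self hlt]
        exact rowSS_trans hrow (hrow0 idx hi)
      · rw [getD_set_ne (fun hh => h hh.symm)]
        exact hrow0 i hi
    · refine ⟨idx, by simpa using hlt, ?_, ?_, ?_⟩
      · rw [getD_set_self hlt]; exact hrow
      · intro i h1 h2
        exact set_last_char hc hlt hrow i h1 (by simpa using h2)
      · intro h
        exact hrow0 idx h

/-! ### Forward direction -/

lemma forward {m n : ℕ} : ∀ (cols : List (ℕ × List ℕ)) (L? : Option (List ℕ)) (x : ℕ),
    Good m n L? cols x → GoodOut m n L? (lenk cols) (skewBump m x cols) := by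
  intro cols
  induction cols with
  | nil =>
    intro L? x hG
    obtain ⟨_, hx, hinv⟩ := hG
    show GoodOut m n L? _ [(0, [x])]
    refine ⟨?_, ⟨0, ?_⟩, ?_⟩
    · rw [GT_cons_iff]
      exact ⟨GT_nil m n, rfl, by simp, List.isChain_singleton x,
        by simpa using hx, by simp, by simp⟩
    · intro k
      cases k with
      | zero => simp
      | succ k => simp
    · intro L hL
      obtain ⟨hLc, -, -, r, hr1, hr2, -, -⟩ := hinv L hL
      constructor
      · simp only [lenk_cons_zero, List.length_singleton]
        omega
      · intro i hi
        simp only [lenk_cons_zero, List.length_singleton] at hi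
        have hi0 : i = 0 := by omega
        subst hi0
        simpa using rowSS_down hLc (Nat.zero_le r) hr1 hr2
  | cons hd tl ih =>
    obtain ⟨o, c⟩ := hd
    intro L? x hG
    obtain ⟨hGT, hx, hinv⟩ := hG
    obtain ⟨hGTr, ho, hne, hc, hbd, hlen0, hrow0⟩ := GT_cons_iff.1 hGT
    have hclen : 0 < c.length := List.length_pos_iff.2 hne
    show GoodOut m n L? _
      (if (c ++ [x]).IsChain (colSS m) then (o, c ++ [x]) :: tl
       else (o, c.set (bidx m x c) x) ::
         skewBump m (c.getD (bidx m x c) 0) tl)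
    by_cases hbr : (c ++ [x]).IsChain (colSS m)
    · rw [if_pos hbr]
      refine ⟨?_, ⟨0, ?_⟩, ?_⟩
      · rw [GT_cons_iff]
        refine ⟨hGTr, ho, by simp, hbr, ?_, by simp; omega, ?_⟩
        · intro a ha
          rcases List.mem_append.1 ha with h | h
          · exact hbd a h
          · simp at h; omega
        · intro i hi
          rw [List.getD_append _ _ _ _ (by omega)]
          exact hrow0 i hi
      · intro k
        cases k with
        | zero => simp
        | succ k => simp
      · intro L hL
        obtain ⟨hLc, hlen, hrows, r, hr1, hr2, hr3, hr4⟩ := hinv L hL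
        simp only [lenk_cons_zero, entk_cons_zero] at hlen hrows hr4
        have hcr : c.length ≤ r := by
          by_contra hcon
          push_neg at hcon
          have h4 := hr4 hcon
          have h5 := ((chain'_append_singleton hne x).1 hbr).2
          rw [colSS_iff] at h5
          have h6 := col_mono hc (show r ≤ c.length - 1 by omega) (by omega)
          rw [rowSS_iff] at h4; omega
        constructor
        · simp only [lenk_cons_zero, List.length_append, List.length_singleton]
          omega
        · intro i hi
          simp only [lenk_cons_zero, List.length_append, List.length_singleton] at hi
          simp only [entk_cons_zero]
          rcases Nat.lt_or_ge i c.length with h | h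
          · rw [List.getD_append _ _ _ _ h]
            exact hrows i h
          · have hieq : i = c.length := by omega
            subst hieq
            have hxval : (c ++ [x]).getD c.length 0 = x := by
              rw [getD_eq_get (by simp)]
              simp
            rw [hxval]
            exact rowSS_down hLc hcr hr1 hr2
    · rw [if_neg hbr]
      obtain ⟨hlt, hrow, hmin⟩ := bidx_facts hne hc hbr
      have hstep := step_good hGT hx hbr
      have ihres := ih (some (c.set (bidx m x c) x)) (c.getD (bidx m x c) 0) hstep
      obtain ⟨hGT', ⟨j', hsh'⟩, hLf'⟩ := ihres
      obtain ⟨hlen', hrows'⟩ := hLf' _ rfl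
      have hlen'' : lenk (skewBump m (c.getD (bidx m x c) 0) tl) 0 ≤ c.length := by
        simpa using hlen'
      refine ⟨?_, ⟨j' + 1, ?_⟩, ?_⟩
      · rw [GT_cons_iff]
        refine ⟨hGT', ho, ?_, chain_set hc hlt hrow hmin, ?_, hlen', hrows'⟩
        · apply List.ne_nil_of_length_pos
          simpa using hclen
        · intro a ha
          rcases List.mem_or_eq_of_mem_set ha with h | h
          · exact hbd a h
          · omega
      · intro k
        cases k with
        | zero => simp
        | succ k =>
          have := hsh' k
          simp only [lenk_cons_succ]
          rw [this]
          by_cases h : k = j' <;> simp [h]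
      · intro L hL
        obtain ⟨hLc, hlen, hrows, r, hr1, hr2, hr3, hr4⟩ := hinv L hL
        simp only [lenk_cons_zero, entk_cons_zero] at hlen hrows hr4
        have hir : bidx m x c ≤ r := by
          by_contra hcon
          push_neg at hcon
          exact hmin r hcon (hr4 (by omega))
        constructor
        · simpa using hlen
        · intro i hi
          simp only [lenk_cons_zero, List.length_set] at hi
          simp only [entk_cons_zero]
          by_cases h : i = bidx m x c
          · subst h
            rw [getD_set_self hlt]
            exact rowSS_down hLc hir hr1 hr2
          · rw [getD_set_ne (fun hh => h hh.symm)]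
            exact hrows i hi

lemma set_getD_self {c : List ℕ} {i : ℕ} (h : i < c.length) : c.set i (c.getD i 0) = c := by
  apply List.ext_getElem (by simp)
  intro j h1 h2
  by_cases hj : j = i
  · subst hj
    rw [List.getElem_set_self, getD_eq_get h]
    simp
  · rw [List.getElem_set_ne (fun hh => hj hh.symm)]

lemma GT_ne_nil {m n : ℕ} {cols : List (ℕ × List ℕ)} (h : GT m n cols)
    (hl : 0 < lenk cols 0) : cols ≠ [] := by
  intro hcon; subst hcon; simp at hl

/-! ### Injectivity -/

lemma bump_inj {m n : ℕ} : ∀ (cols cols' : List (ℕ × List ℕ)) (L? : Option (List ℕ)) (x x' : ℕ),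
    Good m n L? cols x → Good m n L? cols' x' → (∀ k, lenk cols k = lenk cols' k) →
    skewBump m x cols = skewBump m x' cols' → cols = cols' ∧ x = x' := by
  intro cols
  induction cols with
  | nil =>
    intro cols' L? x x' hG hG' hsh heq
    have hnil : cols' = [] := by
      cases cols' with
      | nil => rfl
      | cons hd tl =>
        exfalso
        have h0 := hsh 0
        obtain ⟨o', c'⟩ := hd
        have hne := (GT_cons_iff.1 hG'.1).2.2.1
        have := List.length_pos_iff.2 hne
        simp only [lenk_nil, lenk_cons_zero] at h0
        omega
    subst hnil
    refine ⟨rfl, ?_⟩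
    have : [(0, [x])] = [(0, [x'])] := heq
    simpa using this
  | cons hd tl ih =>
    obtain ⟨o, c⟩ := hd
    intro cols' L? x x' hG hG' hsh heq
    cases cols' with
    | nil =>
      exfalso
      have h0 := hsh 0
      have hne := (GT_cons_iff.1 hG.1).2.2.1
      have := List.length_pos_iff.2 hne
      simp only [lenk_nil, lenk_cons_zero] at h0
      omega
    | cons hd' tl' =>
      obtain ⟨o', c'⟩ := hd'
      obtain ⟨hGT, hx, -⟩ := hG
      obtain ⟨hGT', hx', -⟩ := hG'
      obtain ⟨hGTr, ho, hne, hc, hbd, hlen0, hrow0⟩ := GT_cons_iff.1 hGT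
      obtain ⟨hGTr', ho', hne', hc', hbd', hlen0', hrow0'⟩ := GT_cons_iff.1 hGT'
      have hcl : c.length = c'.length := by simpa using hsh 0
      have heq2 : (if (c ++ [x]).IsChain (colSS m) then (o, c ++ [x]) :: tl
          else (o, c.set (bidx m x c) x) :: skewBump m (c.getD (bidx m x c) 0) tl)
          = (if (c' ++ [x']).IsChain (colSS m) then (o', c' ++ [x']) :: tl'
          else (o', c'.set (bidx m x' c') x') :: skewBump m (c'.getD (bidx m x' c') 0) tl') := heq
      by_cases hb : (c ++ [x]).IsChain (colSS m) <;>
        by_cases hb' : (c' ++ [x']).IsChain (colSS m)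
      · rw [if_pos hb, if_pos hb'] at heq2
        rw [List.cons.injEq, Prod.mk.injEq] at heq2
        obtain ⟨⟨hoo, happ⟩, htl⟩ := heq2
        obtain ⟨hcc, hxx⟩ := List.append_inj happ hcl
        simp only [List.cons.injEq] at hxx
        exact ⟨by rw [hoo, hcc, htl], hxx.1⟩
      · exfalso
        rw [if_pos hb, if_neg hb'] at heq2
        rw [List.cons.injEq, Prod.mk.injEq] at heq2
        have := congrArg List.length heq2.1.2
        simp at this
        omega
      · exfalso
        rw [if_neg hb, if_pos hb'] at heq2
        rw [List.cons.injEq, Prod.mk.injEq] at heq2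
        have := congrArg List.length heq2.1.2
        simp at this
        omega
      · rw [if_neg hb, if_neg hb'] at heq2
        rw [List.cons.injEq, Prod.mk.injEq] at heq2
        obtain ⟨⟨hoo, hM⟩, htl⟩ := heq2
        obtain ⟨hlt, hrow, hmin⟩ := bidx_facts hne hc hb
        obtain ⟨hlt', hrow', hmin'⟩ := bidx_facts hne' hc' hb'
        have hs := step_good hGT hx hb
        have hs' := step_good hGT' hx' hb'
        rw [hM] at hs
        have hshk : ∀ k, lenk tl k = lenk tl' k := fun k => by simpa using hsh (k+1)
        obtain ⟨htt, haa⟩ := ih tl' (some (c'.set (bidx m x' c') x'))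
          (c.getD (bidx m x c) 0) (c'.getD (bidx m x' c') 0) hs hs' hshk htl
        -- identify the two indices as the last index of M with rowSS · a
        have hidx : bidx m x c = bidx m x' c' := by
          apply last_unique (N := (c'.set (bidx m x' c') x').length)
            (P := fun i => rowSS m ((c'.set (bidx m x' c') x').getD i 0) (c'.getD (bidx m x' c') 0))
          · rw [← hM]; simpa [hcl] using hlt
          · rw [← hM, ← haa, getD_set_self hlt]; exact hrow
          · intro i h1 h2
            rw [← hM, ← haa]
            rw [← hM] at h2
            simp only [List.length_set] at h2
            exact set_last_char hc hlt hrow i h1 h2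
          · simpa using hlt'
          · rw [getD_set_self hlt']; exact hrow'
          · intro i h1 h2
            simp only [List.length_set] at h2
            exact set_last_char hc' hlt' hrow' i h1 h2
        have hxx : x = x' := by
          have e1 : (c.set (bidx m x c) x).getD (bidx m x c) 0 = x := getD_set_self hlt x
          rw [hM, hidx, getD_set_self hlt'] at e1
          exact e1.symm
        have hcc : c = c' := by
          have e2 : (c.set (bidx m x c) x).set (bidx m x c) (c.getD (bidx m x c) 0) = c := by
            rw [List.set_set]; exact set_getD_self hlt
          rw [hM, haa, hidx, List.set_set, set_getD_self hlt'] at e2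
          exact e2.symm
        exact ⟨by rw [hoo, hcc, htt], hxx⟩

/-! ### Surjectivity -/

lemma getD_dropLast {M : List ℕ} {i : ℕ} (h : i < M.length - 1) :
    M.dropLast.getD i 0 = M.getD i 0 := by
  rw [getD_eq_get (by simpa using h), getD_eq_get (by omega)]
  simp [List.getElem_dropLast]

lemma chain_set_rev {m a r : ℕ} {M : List ℕ} (hM : M.IsChain (colSS m))
    (hr : r < M.length) (h2 : rowSS m (M.getD r 0) a)
    (h3 : ∀ i, r < i → i < M.length → ¬ rowSS m (M.getD i 0) a) :
    (M.set r a).IsChain (colSS m) := by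
  rw [chain'_iff_getD]
  intro i hi
  simp only [List.length_set] at hi
  have hcc := chain'_iff_getD.1 hM i hi
  rcases Nat.lt_trichotomy (i+1) r with h | h | h
  · rw [getD_set_ne (by omega), getD_set_ne (by omega)]; exact hcc
  · rw [getD_set_ne (by omega), ← h, getD_set_self (by omega)]
    rw [← h] at h2
    rw [colSS_iff] at hcc ⊢
    rw [rowSS_iff] at h2
    omega
  · rcases Nat.lt_or_ge r i with h' | h'
    · rw [getD_set_ne (by omega), getD_set_ne (by omega)]; exact hcc
    · have hri : r = i := by omega
      subst hri
      rw [getD_set_self (by omega), getD_set_ne (by omega)]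
      have h4 := h3 (r+1) (by omega) hi
      rw [colSS_iff]
      rw [rowSS_iff] at h2 h4
      rw [colSS_iff] at hcc
      omega

lemma bump_surj {m n : ℕ} : ∀ (q : List (ℕ × List ℕ)) (L? : Option (List ℕ)) (sh : ℕ → ℕ),
    (∀ k, sh (k+1) ≤ sh k) → (∀ L ∈ L?, L.IsChain (colSS m)) →
    GoodOut m n L? sh q →
    ∃ cols x, Good m n L? cols x ∧ (∀ k, lenk cols k = sh k) ∧ skewBump m x cols = q := by
  intro q
  induction q with
  | nil =>
    intro L? sh hsha hLc hGO
    obtain ⟨hGT, ⟨j, hj⟩, hLf⟩ := hGO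
    exfalso
    have := hj j
    simp at this
  | cons hd rest' ih =>
    obtain ⟨o, M⟩ := hd
    intro L? sh hsha hLc hGO
    obtain ⟨hGT, ⟨j, hj⟩, hLf⟩ := hGO
    obtain ⟨hGTr, ho, hne, hM, hbd, hlen0, hrow0⟩ := GT_cons_iff.1 hGT
    have shmono : ∀ {j k : ℕ}, j ≤ k → sh k ≤ sh j := by
      intro j k hjk
      have key : ∀ (d j : ℕ), sh (j + d) ≤ sh j := by
        intro d
        induction d with
        | zero => simp
        | succ d ihd =>
          intro j
          calc sh (j + (d+1)) = sh ((j+d) + 1) := by ring_nf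
            _ ≤ sh (j+d) := hsha _
            _ ≤ sh j := ihd j
      have : k = j + (k - j) := by omega
      rw [this]; exact key _ _
    cases j with
    | zero =>
      have hM0 : M.length = sh 0 + 1 := by simpa using hj 0
      have hlr : lenk rest' 0 = sh 1 := by simpa using hj 1
      have hs10 : sh 1 ≤ sh 0 := hsha 0
      by_cases h0 : sh 0 = 0
      · -- q is a single box: preimage is ([], x)
        have hr0 : rest' = [] := by
          have h1 : lenk rest' 0 = 0 := by omega
          have h2 := (lenk_eq_zero hGTr.2.1 (j := 0)).1 h1
          exact List.length_eq_zero_iff.1 (by omega)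
        subst hr0
        have hM1 : M.length = 1 := by omega
        obtain ⟨x, hxM⟩ := List.length_eq_one_iff.1 hM1
        subst hxM
        refine ⟨[], x, ⟨GT_nil m n, by simpa using hbd x (by simp), ?_⟩, ?_, ?_⟩
        · intro L hL
          obtain ⟨hq1, hq2⟩ := hLf L hL
          simp only [lenk_cons_zero, List.length_singleton] at hq1 hq2
          refine ⟨hLc L hL, by simp, by simp, ?_⟩
          have hP0 : rowSS m (L.getD 0 0) x := by simpa using hq2 0 (by omega)
          obtain ⟨r, hr0, hr1, hr2, hr3⟩ :=
            exists_greatest (P := fun i => rowSS m (L.getD i 0) x) (by omega : 0 < L.length) hP0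
          exact ⟨r, hr1, hr2, hr3, by simp⟩
        · intro k
          have : sh k ≤ sh 0 := shmono (Nat.zero_le k)
          simp; omega
        · show [(0, [x])] = [(o, [x])]
          rw [ho]
      · -- box added at the bottom of the first column
        have hsh0 : 0 < sh 0 := by omega
        set b := M.getD (sh 0) 0 with hb
        have hdl : M.dropLast ++ [b] = M := by
          have := List.dropLast_append_getLast hne
          rw [List.getLast_eq_getElem] at this
          rw [hb, getD_eq_get (by omega)]
          simpa [hM0] using this
        have hdll : M.dropLast.length = sh 0 := by simp [hM0]
        refine ⟨(o, M.dropLast) :: rest', b, ⟨?_, ?_, ?_⟩, ?_, ?_⟩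
        · rw [GT_cons_iff]
          refine ⟨hGTr, ho, ?_, ?_, ?_, ?_, ?_⟩
          · apply List.ne_nil_of_length_pos
            rw [hdll]; omega
          · exact hM.prefix (List.dropLast_prefix M)
          · intro a ha
            exact hbd a (List.dropLast_subset M ha)
          · omega
          · intro i hi
            rw [getD_dropLast (by omega)]
            exact hrow0 i hi
        · apply hbd
          rw [hb, getD_eq_get (by omega)]
          exact List.get_mem _ _
        · intro L hL
          obtain ⟨hq1, hq2⟩ := hLf L hL
          simp only [lenk_cons_zero, entk_cons_zero] at hq1 hq2
          rw [hM0] at hq1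
          refine ⟨hLc L hL, by simp only [lenk_cons_zero]; omega, ?_, ?_⟩
          · intro i hi
            simp only [lenk_cons_zero, entk_cons_zero] at hi ⊢
            rw [getD_dropLast (by omega)]
            exact hq2 i (by omega)
          · have hPs : rowSS m (L.getD (sh 0) 0) b := hq2 (sh 0) (by omega)
            obtain ⟨r, hr0, hr1, hr2, hr3⟩ :=
              exists_greatest (P := fun i => rowSS m (L.getD i 0) b)
                (by omega : sh 0 < L.length) hPs
            refine ⟨r, hr1, hr2, hr3, ?_⟩
            intro hcon
            simp only [lenk_cons_zero] at hcon
            omega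
        · intro k
          cases k with
          | zero => simpa using hdll
          | succ k =>
            have := hj (k+1)
            simpa using this
        · show (if (M.dropLast ++ [b]).IsChain (colSS m) then _ else _) = _
          rw [hdl, if_pos hM]
    | succ j0 =>
      have hM0 : M.length = sh 0 := by simpa using hj 0
      have hsh0 : 0 < sh 0 := by
        have h1 := GT_lenk_mono hGT (Nat.zero_le (j0+1))
        have h2 := hj (j0+1)
        rw [h2] at h1
        have h3 : (if j0 + 1 = j0 + 1 then 1 else 0) = 1 := if_pos rfl
        rw [h3] at h1
        simp only [lenk_cons_zero] at h1
        omega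
      -- apply the induction hypothesis to the tail with context column M
      obtain ⟨cols0, a, hGa, hsha0, hba⟩ := ih (some M) (fun k => sh (k+1))
        (fun k => hsha (k+1))
        (by intro L hL; rw [Option.mem_def, Option.some.injEq] at hL; subst hL; exact hM)
        ⟨hGTr, ⟨j0, fun k => by
          have := hj (k+1)
          simp only [lenk_cons_succ] at this ⊢
          rw [this]
          by_cases h : k = j0 <;> simp [h]⟩,
         by
          intro L hL
          rw [Option.mem_def, Option.some.injEq] at hL; subst hL
          exact ⟨hlen0, hrow0⟩⟩
      obtain ⟨hGTc, hab, hinvM⟩ := hGa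
      obtain ⟨-, hlenc, hrowsc, r, hr1, hr2, hr3, hr4⟩ := hinvM M rfl
      set bb := M.getD r 0 with hbbdef
      set l := M.set r a with hldef
      have hll : l.length = M.length := by simp [hldef]
      have hlne : l ≠ [] := by
        apply List.ne_nil_of_length_pos; omega
      have hminb : ∀ i < r, ¬ rowSS m bb (M.getD i 0) := by
        intro i hir hcon
        have hmono := col_mono hM (show i ≤ r by omega) hr1
        have heq : M.getD i 0 = bb := by rw [rowSS_iff] at hcon; omega
        have := col_eq hM hir hr1 heq
        rw [rowSS_iff] at hcon
        omega
      have hlchain : l.IsChain (colSS m) := chain_set_rev hM hr1 hr2 hr3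
      have hnotchain : ¬ (l ++ [bb]).IsChain (colSS m) := by
        rw [chain'_append_singleton hlne]
        rintro ⟨-, hcol⟩
        rcases Nat.lt_or_ge r (M.length - 1) with hrl | hrl
        · rw [hldef] at hcol
          rw [List.length_set, getD_set_ne (by omega)] at hcol
          have hmono := col_mono hM (show r ≤ M.length - 1 by omega) (by omega)
          have heq : M.getD (M.length - 1) 0 = bb := by rw [colSS_iff] at hcol; omega
          apply hr3 (M.length - 1) (by omega) (by omega)
          rw [heq]
          exact hr2
        · have hreq : r = M.length - 1 := by omega
          rw [hldef, hreq, List.length_set, getD_set_self (by omega)] at hcol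
          rw [colSS_iff] at hcol
          have h9 := hr2
          rw [rowSS_iff] at h9
          omega
      have hfind : l.findIdx (fun a' => decide (rowSS m bb a')) = r := by
        rw [List.findIdx_eq (by omega)]
        constructor
        · have h8 : l[r] = a := by
            simp only [hldef]
            simp
          rw [h8]
          simpa using hr2
        · intro jj hjj
          have h8 : l[jj] = M.getD jj 0 := by
            simp only [hldef]
            rw [List.getElem_set_ne (show r ≠ jj by omega)]
            rw [getD_eq_get (show jj < M.length by omega)]
            simp
          rw [h8]
          simpa using hminb jj (by omega)
      refine ⟨(o, l) :: cols0, bb, ⟨?_, ?_, ?_⟩, ?_, ?_⟩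
      · rw [GT_cons_iff]
        refine ⟨hGTc, ho, hlne, hlchain, ?_, ?_, ?_⟩
        · intro a' ha'
          rw [hldef] at ha'
          rcases List.mem_or_eq_of_mem_set ha' with h | h
          · exact hbd a' h
          · omega
        · rw [hll]; exact hlenc
        · intro i hi
          by_cases hir : i = r
          · subst hir
            rw [hldef, getD_set_self hr1]
            exact hr4 hi
          · rw [hldef, getD_set_ne (fun hh => hir hh.symm)]
            exact hrowsc i hi
      · apply hbd
        rw [hbbdef, getD_eq_get (by omega)]
        exact List.get_mem _ _
      · intro L hL
        obtain ⟨hq1, hq2⟩ := hLf L hL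
        simp only [lenk_cons_zero, entk_cons_zero] at hq1 hq2
        rw [hM0] at hq1
        have hLch := hLc L hL
        refine ⟨hLch, by simp only [lenk_cons_zero]; omega, ?_, ?_⟩
        · intro i hi
          simp only [lenk_cons_zero] at hi
          simp only [entk_cons_zero]
          rw [hll] at hi
          by_cases hir : i = r
          · subst hir
            rw [hldef, getD_set_self hr1]
            have h5 := hq2 i (by omega)
            rw [rowSS_iff] at h5 hr2 ⊢
            omega
          · rw [hldef, getD_set_ne (fun hh => hir hh.symm)]
            exact hq2 i (by omega)
        · have hPr : rowSS m (L.getD r 0) bb := hq2 r (by omega)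
          obtain ⟨r', hr0', hr1', hr2', hr3'⟩ :=
            exists_greatest (P := fun i => rowSS m (L.getD i 0) bb)
              (show r < L.length by omega) hPr
          refine ⟨r', hr1', hr2', hr3', ?_⟩
          intro hcon
          simp only [lenk_cons_zero, entk_cons_zero] at hcon ⊢
          rw [hll] at hcon
          rcases Nat.eq_or_lt_of_le hr0' with he | hlt'
          · rw [hldef, ← he, getD_set_self hr1]
            exact hr2
          · rw [hldef, getD_set_ne (show r ≠ r' by omega)]
            have hmono := col_mono hM (show r ≤ r' by omega) (by omega)
            rcases Nat.eq_or_lt_of_le hmono with he2 | hlt2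
            · exfalso
              apply hr3 r' hlt' (by omega)
              rw [← he2]
              exact hr2
            · rw [rowSS_iff]; omega
      · intro k
        cases k with
        | zero => simp only [lenk_cons_zero]; omega
        | succ k => simpa using hsha0 k
      · show (if (l ++ [bb]).IsChain (colSS m) then _
            else (o, l.set (l.findIdx fun a' => decide (rowSS m bb a')) bb) ::
              skewBump m (l.getD (l.findIdx fun a' => decide (rowSS m bb a')) 0) cols0) = _
        rw [if_neg hnotchain, hfind]
        have h6 : l.set r bb = M := by
          rw [hldef, List.set_set, hbbdef, set_getD_self hr1]
        have h7 : l.getD r 0 = a := by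
          rw [hldef]; exact getD_set_self hr1 a
        rw [h6, h7, hba]

/-! ### The hook condition -/

lemma colAt_mem {cols : List (ℕ × List ℕ)} {j : ℕ} (h : j < cols.length) :
    colAt cols j ∈ cols := by
  unfold colAt
  rw [List.getD_eq_getElem _ _ h]
  exact List.getElem_mem h

lemma lt_length_of_lenk_pos {cols : List (ℕ × List ℕ)} {j : ℕ} (h : 0 < lenk cols j) :
    j < cols.length := by
  by_contra hcon
  push_neg at hcon
  unfold lenk colAt at h
  rw [List.getD_eq_default _ _ hcon] at h
  simp at h

lemma col_lower {m : ℕ} {c : List ℕ} (hc : c.IsChain (colSS m)) :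
    ∀ i < c.length, min i m ≤ c.getD i 0 := by
  intro i
  induction i with
  | zero => simp
  | succ i ihi =>
    intro hi
    have h1 := ihi (by omega)
    have h2 := chain'_iff_getD.1 hc i hi
    rw [colSS_iff] at h2
    omega

lemma GT_hook {m n : ℕ} {cols : List (ℕ × List ℕ)} (h : GT m n cols) :
    lenk cols n ≤ m := by
  by_contra hcon
  push_neg at hcon
  have hml : ∀ j ≤ n, m < lenk cols j := fun j hj => lt_of_lt_of_le hcon (GT_lenk_mono h hj)
  have key : ∀ d ≤ n, m + d ≤ entk cols d m := by
    intro d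
    induction d with
    | zero =>
      intro _
      have h0 := hml 0 (Nat.zero_le n)
      have hcm := h.2.2.1 _ (colAt_mem (lt_length_of_lenk_pos (j := 0) (by omega)))
      have := col_lower hcm m (by unfold lenk at h0; omega)
      simpa [entk] using this
    | succ d ihd =>
      intro hd
      have h1 := ihd (by omega)
      have h2 := h.2.2.2.2.2 d m (by have := hml (d+1) hd; omega)
      rw [rowSS_iff] at h2
      omega
  have hfin := key n (le_refl n)
  have hnl := hml n (le_refl n)
  have hmem : entk cols n m ∈ (colAt cols n).2 := by
    unfold entk
    rw [getD_eq_get (by unfold lenk at hnl; omega)]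
    exact List.get_mem _ _
  have := h.2.2.2.1 _ (colAt_mem (lt_length_of_lenk_pos (j := n) (by omega))) _ hmem
  omega

/-! ### Young diagram bookkeeping -/

lemma colLen_eq {Y : YoungDiagram} {k c : ℕ} (h : ∀ i, (i, k) ∈ Y ↔ i < c) :
    Y.colLen k = c := by
  have h2 : ∀ i, i < Y.colLen k ↔ i < c :=
    fun i => Iff.trans YoungDiagram.mem_iff_lt_colLen.symm (h i)
  have h3 := h2 (Y.colLen k)
  have h4 := h2 c
  omega

lemma rowLen_le_iff {Y : YoungDiagram} {m n : ℕ} :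
    Y.rowLen m ≤ n ↔ Y.colLen n ≤ m := by
  constructor
  · intro h
    by_contra hcon
    push_neg at hcon
    have : (m, n) ∈ Y := YoungDiagram.mem_iff_lt_colLen.2 hcon
    rw [YoungDiagram.mem_iff_lt_rowLen] at this
    omega
  · intro h
    by_contra hcon
    push_neg at hcon
    have : (m, n) ∈ Y := YoungDiagram.mem_iff_lt_rowLen.2 hcon
    rw [YoungDiagram.mem_iff_lt_colLen] at this
    omega

/-- Adding a box at the bottom of column `j` of `Y₀`, assuming this is a valid co-corner. -/
lemma exists_Y_of_shape {m n : ℕ} {Y₀ : YoungDiagram} {q : List (ℕ × List ℕ)} {j : ℕ}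
    (hGT : GT m n q) (hsh : ∀ k, lenk q k = Y₀.colLen k + if k = j then 1 else 0) :
    ∃ Y : YoungDiagram, Y₀.cells ⊆ Y.cells ∧ (Y.cells \ Y₀.cells).card = 1 ∧
      Y.rowLen m ≤ n ∧ ∀ k, lenk q k = Y.colLen k := by
  have hnew : (Y₀.colLen j, j) ∉ Y₀ := by
    rw [YoungDiagram.mem_iff_lt_colLen]
    omega
  have hlow : IsLowerSet ((Y₀.cells ∪ {(Y₀.colLen j, j)} : Finset (ℕ × ℕ)) : Set (ℕ × ℕ)) := by
    intro a b hba ha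
    simp only [Finset.coe_union, Set.mem_union, Finset.coe_singleton, Set.mem_singleton_iff,
      Finset.mem_coe, YoungDiagram.mem_cells] at ha ⊢
    rcases ha with ha | ha
    · exact Or.inl (Y₀.isLowerSet hba ha)
    · have hb1 : b.1 ≤ Y₀.colLen j := by rw [ha] at hba; exact hba.1
      have hb2 : b.2 ≤ j := by rw [ha] at hba; exact hba.2
      by_cases hbj : b.2 = j
      · rcases Nat.eq_or_lt_of_le hb1 with he | hlt
        · right
          rw [← he, ← hbj]
        · left
          rw [YoungDiagram.mem_iff_lt_colLen, hbj]
          exact hlt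
      · left
        rw [YoungDiagram.mem_iff_lt_colLen]
        have hmono := GT_lenk_mono hGT (show b.2 ≤ j by omega)
        have h1 := hsh b.2
        have h2 := hsh j
        rw [if_neg hbj] at h1
        rw [if_pos rfl] at h2
        omega
  refine ⟨⟨Y₀.cells ∪ {(Y₀.colLen j, j)}, hlow⟩, Finset.subset_union_left, ?_, ?_, ?_⟩
  · have : (Y₀.cells ∪ {(Y₀.colLen j, j)}) \ Y₀.cells = {(Y₀.colLen j, j)} := by
      ext a
      simp only [Finset.mem_sdiff, Finset.mem_union, Finset.mem_singleton]
      constructor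
      · rintro ⟨ha | ha, hna⟩
        · exact absurd ha hna
        · exact ha
      · intro ha
        refine ⟨Or.inr ha, ?_⟩
        rw [ha]
        intro hcon
        exact hnew ((YoungDiagram.mem_cells _).1 hcon)
    rw [YoungDiagram.cells]
    rw [this]
    simp
  · rw [rowLen_le_iff]
    have hcl : YoungDiagram.colLen ⟨Y₀.cells ∪ {(Y₀.colLen j, j)}, hlow⟩ n = lenk q n := by
      apply colLen_eq
      intro i
      rw [← YoungDiagram.mem_cells]
      simp only [YoungDiagram.cells, Finset.mem_union, Finset.mem_singleton,
        YoungDiagram.mem_cells, Prod.mk.injEq]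
      rw [YoungDiagram.mem_iff_lt_colLen]
      have h1 := hsh n
      by_cases hj : n = j
      · subst hj
        rw [if_pos rfl] at h1
        constructor
        · intro hh
          rcases hh with hh | hh <;> omega
        · intro hh
          rcases Nat.lt_or_ge i (Y₀.colLen n) with h | h
          · exact Or.inl h
          · exact Or.inr ⟨by omega, rfl⟩
      · rw [if_neg hj] at h1
        constructor
        · intro hh
          rcases hh with hh | hh
          · omega
          · exact absurd hh.2 hj
        · intro hh
          exact Or.inl (by omega)
    rw [hcl]
    exact GT_hook hGT
  · intro k
    symm
    apply colLen_eq
    intro i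
    rw [← YoungDiagram.mem_cells]
    simp only [YoungDiagram.cells, Finset.mem_union, Finset.mem_singleton,
      YoungDiagram.mem_cells, Prod.mk.injEq]
    rw [YoungDiagram.mem_iff_lt_colLen]
    have h1 := hsh k
    by_cases hj : k = j
    · subst hj
      rw [if_pos rfl] at h1
      constructor
      · intro hh
        rcases hh with hh | hh <;> omega
      · intro hh
        rcases Nat.lt_or_ge i (Y₀.colLen k) with h | h
        · exact Or.inl h
        · exact Or.inr ⟨by omega, rfl⟩
    · rw [if_neg hj] at h1
      constructor
      · intro hh
        rcases hh with hh | hh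
        · omega
        · exact absurd hh.2 hj
      · intro hh
        exact Or.inl (by omega)

lemma shape_of_Y {Y₀ Y : YoungDiagram} (hsub : Y₀.cells ⊆ Y.cells)
    (hcard : (Y.cells \ Y₀.cells).card = 1) :
    ∃ j, ∀ k, Y.colLen k = Y₀.colLen k + if k = j then 1 else 0 := by
  obtain ⟨x, hx⟩ := Finset.card_eq_one.1 hcard
  obtain ⟨x1, x2⟩ := x
  have hdiff : ∀ a : ℕ × ℕ, (a ∈ Y ∧ a ∉ Y₀) ↔ a = (x1, x2) := by
    intro a
    rw [← YoungDiagram.mem_cells, ← YoungDiagram.mem_cells, ← Finset.mem_sdiff, hx,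
      Finset.mem_singleton]
  have hxY : (x1, x2) ∈ Y := ((hdiff _).2 rfl).1
  have hxnY : (x1, x2) ∉ Y₀ := ((hdiff _).2 rfl).2
  have hle : ∀ k, Y₀.colLen k ≤ Y.colLen k := by
    intro k
    by_contra hcon
    push_neg at hcon
    have h1 : (Y.colLen k, k) ∈ Y₀ := YoungDiagram.mem_iff_lt_colLen.2 hcon
    have h2 : (Y.colLen k, k) ∈ Y := by
      rw [← YoungDiagram.mem_cells]
      exact hsub ((YoungDiagram.mem_cells _).2 h1)
    rw [YoungDiagram.mem_iff_lt_colLen] at h2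
    omega
  have hxge : Y₀.colLen x2 ≤ x1 := by
    by_contra hcon
    push_neg at hcon
    exact hxnY (YoungDiagram.mem_iff_lt_colLen.2 hcon)
  have hx1 : x1 = Y₀.colLen x2 := by
    rcases Nat.eq_or_lt_of_le hxge with he | hlt
    · omega
    · exfalso
      have hmem : (Y₀.colLen x2, x2) ∈ Y := by
        apply Y.isLowerSet (b := (Y₀.colLen x2, x2)) (a := (x1, x2)) _ hxY
        exact ⟨by omega, le_refl _⟩
      have hnmem : (Y₀.colLen x2, x2) ∉ Y₀ := by
        rw [YoungDiagram.mem_iff_lt_colLen]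
        omega
      have := (hdiff _).1 ⟨hmem, hnmem⟩
      rw [Prod.mk.injEq] at this
      omega
  refine ⟨x2, ?_⟩
  intro k
  by_cases hk : k = x2
  · subst hk
    rw [if_pos rfl]
    have hge : Y₀.colLen k + 1 ≤ Y.colLen k := by
      have := YoungDiagram.mem_iff_lt_colLen.1 hxY
      omega
    rcases Nat.eq_or_lt_of_le hge with he | hlt
    · omega
    · exfalso
      have hmem : (Y₀.colLen k + 1, k) ∈ Y := YoungDiagram.mem_iff_lt_colLen.2 (by omega)
      have hnmem : (Y₀.colLen k + 1, k) ∉ Y₀ := by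
        rw [YoungDiagram.mem_iff_lt_colLen]
        omega
      have := (hdiff _).1 ⟨hmem, hnmem⟩
      rw [Prod.mk.injEq] at this
      omega
  · rw [if_neg hk]
    have h1 := hle k
    rcases Nat.eq_or_lt_of_le h1 with he | hlt
    · omega
    · exfalso
      have hmem : (Y₀.colLen k, k) ∈ Y := YoungDiagram.mem_iff_lt_colLen.2 (by omega)
      have hnmem : (Y₀.colLen k, k) ∉ Y₀ := by
        rw [YoungDiagram.mem_iff_lt_colLen]
        omega
      have := (hdiff _).1 ⟨hmem, hnmem⟩
      rw [Prod.mk.injEq] at this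
      exact hk this.2

end BKK

/-- Theorem 4.18 of Benkart–Kang–Kashiwara: for an `(m,n)`-hook Young diagram
`Y₀`, the column bumping map `T ⊗ c ↦ bump(T, c)` is a bijection from
`B(Y₀) × B` onto `⊔_{Y ∈ 𝒴} B(Y)`, where `𝒴` is the set of `(m,n)`-hook
Young diagrams obtained from `Y₀` by adding one box at a co-corner.  (A
straight tableau is presented column-wise, with all column tops at row 0 and
column lengths given by `Y.colLen`.) -/
theorem bump_bijOn (m n : ℕ) (Y₀ : YoungDiagram) (hY₀ : Y₀.rowLen m ≤ n) :
    Set.BijOn (fun p : List (ℕ × List ℕ) × ℕ => skewBump m p.2 p.1)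
      {p : List (ℕ × List ℕ) × ℕ | IsSkewSSYT m n p.1 ∧
        (∀ c ∈ p.1, c.1 = 0) ∧
        (∀ j, ((colAt p.1 j).2).length = Y₀.colLen j) ∧ p.2 < m + n}
      {q : List (ℕ × List ℕ) | IsSkewSSYT m n q ∧ (∀ c ∈ q, c.1 = 0) ∧
        ∃ Y : YoungDiagram, Y₀.cells ⊆ Y.cells ∧ (Y.cells \ Y₀.cells).card = 1 ∧
          Y.rowLen m ≤ n ∧ ∀ j, ((colAt q j).2).length = Y.colLen j} := by
  classical
  refine ⟨?_, ?_, ?_⟩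
  · -- MapsTo
    rintro ⟨cols, x⟩ ⟨hIs, hoff, hshape, hx⟩
    have hGT : BKK.GT m n cols := BKK.GT_iff.2 ⟨hIs, hoff⟩
    have hGood : BKK.Good m n none cols x := ⟨hGT, hx, by intro L hL; simp at hL⟩
    obtain ⟨hGT', ⟨j, hsh'⟩, -⟩ := BKK.forward cols none x hGood
    have hsh2 : ∀ k, BKK.lenk (skewBump m x cols) k = Y₀.colLen k + if k = j then 1 else 0 := by
      intro k
      rw [hsh' k]
      have : BKK.lenk cols k = Y₀.colLen k := hshape k
      rw [this]
    obtain ⟨Y, h1, h2, h3, h4⟩ := BKK.exists_Y_of_shape hGT' hsh2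
    exact ⟨(BKK.GT_iff.1 hGT').1, (BKK.GT_iff.1 hGT').2, Y, h1, h2, h3, fun k => h4 k⟩
  · -- InjOn
    rintro ⟨cols1, x1⟩ ⟨hIs1, hoff1, hsp1, hx1⟩ ⟨cols2, x2⟩ ⟨hIs2, hoff2, hsp2, hx2⟩ heq
    have h := BKK.bump_inj cols1 cols2 none x1 x2
      ⟨BKK.GT_iff.2 ⟨hIs1, hoff1⟩, hx1, by intro L hL; simp at hL⟩
      ⟨BKK.GT_iff.2 ⟨hIs2, hoff2⟩, hx2, by intro L hL; simp at hL⟩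
      (fun k => by
        have e1 : BKK.lenk cols1 k = Y₀.colLen k := hsp1 k
        have e2 : BKK.lenk cols2 k = Y₀.colLen k := hsp2 k
        rw [e1, e2]) heq
    rw [Prod.mk.injEq]
    exact ⟨h.1, h.2⟩
  · -- SurjOn
    rintro q ⟨hIs, hoff, Y, hsub, hcard, hhook, hcols⟩
    have hGT : BKK.GT m n q := BKK.GT_iff.2 ⟨hIs, hoff⟩
    obtain ⟨j, hYsh⟩ := BKK.shape_of_Y hsub hcard
    have hGO : BKK.GoodOut m n none Y₀.colLen q := by
      refine ⟨hGT, ⟨j, fun k => ?_⟩, by intro L hL; simp at hL⟩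
      have e1 : BKK.lenk q k = Y.colLen k := hcols k
      rw [e1, hYsh k]
    obtain ⟨cols, x, hGood, hlens, hbump⟩ := BKK.bump_surj q none Y₀.colLen
      (fun k => Y₀.colLen_anti k (k+1) (by omega)) (by intro L hL; simp at hL) hGO
    exact ⟨(cols, x),
      ⟨(BKK.GT_iff.1 hGood.1).1, (BKK.GT_iff.1 hGood.1).2, fun k => hlens k, hGood.2.1⟩, hbump⟩
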